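/- Let n ≥ 1, let A, B : Fin n → Fin n → ℝ have all entries in [0.9, 1.1], let k ∈ Fin n and 0 ≤ δ ≤ 1/10, and let G_t = (1−t)G₀ + tG₁ be the associated homotopy of (n+1)×(n+1) bimatrix games. Then every Nash equilibrium (x, y) of the game G_{3/5} satisfies 1/10 ≤ x(0) ≤ 9/10 and 1/10 ≤ y(0) ≤ 9/10. -/
import Mathlib


open Finset in
/-- Expected payoff Σ_{i,j} x(i)·M(i,j)·y(j) of the game matrix M under mixed
strategies x (row) and y (column). -/
def payoff {m : ℕ} (M : Fin m → Fin m → ℝ) (x y : Fin m → ℝ) : ℝ :=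
  ∑ i, ∑ j, x i * M i j * y j

/-- (x,y) is a Nash equilibrium of the bimatrix game with row payoff matrix R and
column payoff matrix C. -/
def NashEq {m : ℕ} (R C : Fin m → Fin m → ℝ) (x y : Fin m → ℝ) : Prop :=
  x ∈ stdSimplex ℝ (Fin m) ∧ y ∈ stdSimplex ℝ (Fin m) ∧
  (∀ x' ∈ stdSimplex ℝ (Fin m), payoff R x' y ≤ payoff R x y) ∧
  (∀ y' ∈ stdSimplex ℝ (Fin m), payoff C x y' ≤ payoff C x y)

/-- Row payoff matrix R₁ of the game G₁: R₁(0,j) = 0, R₁(i+1,0) = −1,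
R₁(i+1,j+1) = A(i,j). -/
def R1 {n : ℕ} (A : Fin n → Fin n → ℝ) (i j : Fin (n + 1)) : ℝ :=
  Fin.cases 0 (fun i' => Fin.cases (-1) (fun j' => A i' j') j) i

/-- Column payoff matrix C₁ of the game G₁: C₁(0,0) = −1, C₁(0,j+1) = 3/4 + δ if j = k
and 3/4 otherwise, C₁(i+1,0) = 3/4, C₁(i+1,j+1) = B(i,j). -/
noncomputable def C1 {n : ℕ} (B : Fin n → Fin n → ℝ) (k : Fin n) (δ : ℝ) (i j : Fin (n + 1)) : ℝ :=
  Fin.cases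
    (Fin.cases (-1) (fun j' => if j' = k then 3 / 4 + δ else 3 / 4) j)
    (fun i' => Fin.cases (3 / 4) (fun j' => B i' j') j) i

/-- Row payoff matrix R₀ of the game G₀: payoff 1 on row 0, payoff 0 elsewhere. -/
noncomputable def R0 {n : ℕ} (i _j : Fin (n + 1)) : ℝ := if i = 0 then 1 else 0

/-- Column payoff matrix C₀ of the game G₀: payoff 1 on column 0, payoff 0 elsewhere. -/
noncomputable def C0 {n : ℕ} (_i j : Fin (n + 1)) : ℝ := if j = 0 then 1 else 0

open Finset

lemma pure_mem {m : ℕ} (i : Fin m) :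
    (fun i' => if i' = i then (1:ℝ) else 0) ∈ stdSimplex ℝ (Fin m) := by
  constructor
  · intro j; dsimp; split <;> norm_num
  · simp

lemma payoff_left_eq {m : ℕ} (M : Fin m → Fin m → ℝ) (x y : Fin m → ℝ) :
    payoff M x y = ∑ i, x i * ∑ j, M i j * y j := by
  simp [payoff, Finset.mul_sum, mul_assoc]

lemma payoff_right_eq {m : ℕ} (M : Fin m → Fin m → ℝ) (x y : Fin m → ℝ) :
    payoff M x y = ∑ j, (∑ i, x i * M i j) * y j := by
  rw [payoff, Finset.sum_comm]
  simp [Finset.sum_mul]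

lemma payoff_pure_left {m : ℕ} (M : Fin m → Fin m → ℝ) (i : Fin m) (y : Fin m → ℝ) :
    payoff M (fun i' => if i' = i then (1:ℝ) else 0) y = ∑ j, M i j * y j := by
  rw [payoff_left_eq]
  simp [ite_mul]

lemma payoff_pure_right {m : ℕ} (M : Fin m → Fin m → ℝ) (x : Fin m → ℝ) (j : Fin m) :
    payoff M x (fun j' => if j' = j then (1:ℝ) else 0) = ∑ i, x i * M i j := by
  rw [payoff_right_eq]
  simp [mul_ite]

lemma support_row {m : ℕ} {R C : Fin m → Fin m → ℝ} {x y : Fin m → ℝ}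
    (h : NashEq R C x y) (i i₀ : Fin m)
    (hlt : ∑ j, R i j * y j < ∑ j, R i₀ j * y j) : x i = 0 := by
  obtain ⟨hx, -, hR, -⟩ := h
  set v := payoff R x y with hv
  have hle : ∀ i' : Fin m, ∑ j, R i' j * y j ≤ v := by
    intro i'
    have := hR _ (pure_mem i')
    rwa [payoff_pure_left] at this
  have hiv : ∑ j, R i j * y j < v := lt_of_lt_of_le hlt (hle i₀)
  by_contra hxi
  have hxi' : 0 < x i := lt_of_le_of_ne (hx.1 i) (Ne.symm hxi)
  have hvv : v < v := by
    calc v = ∑ i', x i' * ∑ j, R i' j * y j := payoff_left_eq R x y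
    _ < ∑ i' : Fin m, x i' * v := by
        apply Finset.sum_lt_sum
        · intro i' _
          exact mul_le_mul_of_nonneg_left (hle i') (hx.1 i')
        · exact ⟨i, Finset.mem_univ i, mul_lt_mul_of_pos_left hiv hxi'⟩
    _ = v := by rw [← Finset.sum_mul, hx.2, one_mul]
  exact absurd hvv (lt_irrefl v)

lemma support_col {m : ℕ} {R C : Fin m → Fin m → ℝ} {x y : Fin m → ℝ}
    (h : NashEq R C x y) (j j₀ : Fin m)
    (hlt : ∑ i, x i * C i j < ∑ i, x i * C i j₀) : y j = 0 := by
  obtain ⟨-, hy, -, hC⟩ := h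
  set v := payoff C x y with hv
  have hle : ∀ j' : Fin m, ∑ i, x i * C i j' ≤ v := by
    intro j'
    have := hC _ (pure_mem j')
    rwa [payoff_pure_right] at this
  have hjv : ∑ i, x i * C i j < v := lt_of_lt_of_le hlt (hle j₀)
  by_contra hyj
  have hyj' : 0 < y j := lt_of_le_of_ne (hy.1 j) (Ne.symm hyj)
  have hvv : v < v := by
    calc v = ∑ j', (∑ i, x i * C i j') * y j' := payoff_right_eq C x y
    _ < ∑ j' : Fin m, v * y j' := by
        apply Finset.sum_lt_sum
        · intro j' _
          exact mul_le_mul_of_nonneg_right (hle j') (hy.1 j')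
        · exact ⟨j, Finset.mem_univ j, mul_lt_mul_of_pos_right hjv hyj'⟩
    _ = v := by rw [← Finset.mul_sum, hy.2, mul_one]
  exact absurd hvv (lt_irrefl v)

set_option maxHeartbeats 1000000 in
/-- in every Nash equilibrium of G_{3/5}, both players put probability
between 1/10 and 9/10 on their 0-th strategy. -/
theorem nashEq_Gmid_mixed (n : ℕ) (hn : 1 ≤ n) (A B : Fin n → Fin n → ℝ)
    (hA : ∀ i j, A i j ∈ Set.Icc (0.9 : ℝ) 1.1)
    (hB : ∀ i j, B i j ∈ Set.Icc (0.9 : ℝ) 1.1)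
    (k : Fin n) (δ : ℝ) (hδ0 : 0 ≤ δ) (hδ1 : δ ≤ 1 / 10)
    (x y : Fin (n + 1) → ℝ)
    (hNE : NashEq (fun i j => (1 - 3 / 5 : ℝ) * R0 i j + (3 / 5 : ℝ) * R1 A i j)
                  (fun i j => (1 - 3 / 5 : ℝ) * C0 i j + (3 / 5 : ℝ) * C1 B k δ i j) x y) :
    (1 / 10 ≤ x 0 ∧ x 0 ≤ 9 / 10) ∧ (1 / 10 ≤ y 0 ∧ y 0 ≤ 9 / 10) := by
  set Rt : Fin (n+1) → Fin (n+1) → ℝ :=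
    fun i j => (1 - 3 / 5 : ℝ) * R0 i j + (3 / 5 : ℝ) * R1 A i j with hRt
  set Ct : Fin (n+1) → Fin (n+1) → ℝ :=
    fun i j => (1 - 3 / 5 : ℝ) * C0 i j + (3 / 5 : ℝ) * C1 B k δ i j with hCt
  have hx := hNE.1
  have hy := hNE.2.1
  have hx0 : 0 ≤ x 0 := hx.1 0
  have hy0 : 0 ≤ y 0 := hy.1 0
  have hxs : ∑ i, x i = 1 := hx.2
  have hys : ∑ j, y j = 1 := hy.2
  rw [Fin.sum_univ_succ] at hxs hys
  have hxt : ∑ i : Fin n, x i.succ = 1 - x 0 := by linarith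
  have hyt : ∑ j : Fin n, y j.succ = 1 - y 0 := by linarith
  have hxtn : (0:ℝ) ≤ ∑ i : Fin n, x i.succ :=
    Finset.sum_nonneg fun i _ => hx.1 i.succ
  have hytn : (0:ℝ) ≤ ∑ j : Fin n, y j.succ :=
    Finset.sum_nonneg fun j _ => hy.1 j.succ
  have hx1 : x 0 ≤ 1 := by linarith
  have hy1 : y 0 ≤ 1 := by linarith
  set SA : Fin n → ℝ := fun i => ∑ j' : Fin n, A i j' * y j'.succ with hSA
  set SB : Fin n → ℝ := fun j => ∑ i' : Fin n, x i'.succ * B i' j with hSB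
  -- matrix entries
  have hRt0 : ∀ j : Fin (n+1), Rt 0 j = 2/5 := by
    intro j; simp [hRt, R0, R1]; norm_num
  have hRts0 : ∀ i : Fin n, Rt i.succ 0 = -(3/5) := by
    intro i; simp [hRt, R0, R1, Fin.succ_ne_zero]
  have hRtss : ∀ (i j : Fin n), Rt i.succ j.succ = (3/5) * A i j := by
    intro i j; simp [hRt, R0, R1, Fin.succ_ne_zero]
  have hCt00 : Ct 0 0 = -(1/5) := by
    simp [hCt, C0, C1]; norm_num
  have hCts0 : ∀ i : Fin n, Ct i.succ 0 = 17/20 := by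
    intro i; simp [hCt, C0, C1, Fin.succ_ne_zero]; norm_num
  have hCt0s : ∀ j : Fin n, Ct 0 j.succ = (3/5) * (if j = k then 3/4 + δ else 3/4) := by
    intro j; simp [hCt, C0, C1, Fin.succ_ne_zero]
  have hCtss : ∀ (i j : Fin n), Ct i.succ j.succ = (3/5) * B i j := by
    intro i j; simp [hCt, C0, C1, Fin.succ_ne_zero]
  -- pure row payoffs
  have hp0 : ∑ j, Rt 0 j * y j = 2/5 := by
    have h : ∀ j : Fin (n+1), Rt 0 j * y j = (2/5) * y j := fun j => by rw [hRt0]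
    rw [Finset.sum_congr rfl fun j _ => h j, ← Finset.mul_sum, hy.2, mul_one]
  have hpsucc : ∀ i : Fin n,
      ∑ j, Rt i.succ j * y j = -(3/5) * y 0 + (3/5) * SA i := by
    intro i
    rw [Fin.sum_univ_succ, hRts0]
    have h2 : ∀ j' : Fin n, Rt i.succ j'.succ * y j'.succ
        = (3/5) * (A i j' * y j'.succ) := by
      intro j'; rw [hRtss]; ring
    rw [Finset.sum_congr rfl fun j' _ => h2 j', ← Finset.mul_sum]
  -- pure column payoffs
  have hq0 : ∑ i, x i * Ct i 0 = x 0 * (-(1/5)) + (1 - x 0) * (17/20) := by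
    rw [Fin.sum_univ_succ, hCt00]
    have h2 : ∀ i' : Fin n, x i'.succ * Ct i'.succ 0 = x i'.succ * (17/20) := by
      intro i'; rw [hCts0]
    rw [Finset.sum_congr rfl fun i' _ => h2 i', ← Finset.sum_mul, hxt]
  have hqsucc : ∀ j : Fin n,
      ∑ i, x i * Ct i j.succ
        = x 0 * ((3/5) * (if j = k then 3/4 + δ else 3/4)) + (3/5) * SB j := by
    intro j
    rw [Fin.sum_univ_succ, hCt0s]
    have h2 : ∀ i' : Fin n, x i'.succ * Ct i'.succ j.succ
        = (3/5) * (x i'.succ * B i' j) := by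
      intro i'; rw [hCtss]; ring
    rw [Finset.sum_congr rfl fun i' _ => h2 i', ← Finset.mul_sum]
  -- bounds on tails
  have hSAlb : ∀ i : Fin n, (0.9:ℝ) * (1 - y 0) ≤ SA i := by
    intro i
    rw [hSA]
    calc (0.9:ℝ) * (1 - y 0) = ∑ j' : Fin n, 0.9 * y j'.succ := by
          rw [← Finset.mul_sum, hyt]
    _ ≤ ∑ j' : Fin n, A i j' * y j'.succ :=
        Finset.sum_le_sum fun j' _ =>
          mul_le_mul_of_nonneg_right (hA i j').1 (hy.1 j'.succ)
  have hSAub : ∀ i : Fin n, SA i ≤ (1.1:ℝ) * (1 - y 0) := by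
    intro i
    rw [hSA]
    calc ∑ j' : Fin n, A i j' * y j'.succ ≤ ∑ j' : Fin n, 1.1 * y j'.succ :=
        Finset.sum_le_sum fun j' _ =>
          mul_le_mul_of_nonneg_right (hA i j').2 (hy.1 j'.succ)
    _ = (1.1:ℝ) * (1 - y 0) := by rw [← Finset.mul_sum, hyt]
  have hSBlb : ∀ j : Fin n, (0.9:ℝ) * (1 - x 0) ≤ SB j := by
    intro j
    rw [hSB]
    calc (0.9:ℝ) * (1 - x 0) = ∑ i' : Fin n, x i'.succ * 0.9 := by
          rw [← Finset.sum_mul, hxt]; ring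
    _ ≤ ∑ i' : Fin n, x i'.succ * B i' j :=
        Finset.sum_le_sum fun i' _ =>
          mul_le_mul_of_nonneg_left (hB i' j).1 (hx.1 i'.succ)
  have hSBub : ∀ j : Fin n, SB j ≤ (1.1:ℝ) * (1 - x 0) := by
    intro j
    rw [hSB]
    calc ∑ i' : Fin n, x i'.succ * B i' j ≤ ∑ i' : Fin n, x i'.succ * 1.1 :=
        Finset.sum_le_sum fun i' _ =>
          mul_le_mul_of_nonneg_left (hB i' j).2 (hx.1 i'.succ)
    _ = (1.1:ℝ) * (1 - x 0) := by rw [← Finset.sum_mul, hxt]; ring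
  have hcoef_lb : ∀ j : Fin n, (9/20 : ℝ) ≤ (3/5) * (if j = k then 3/4 + δ else 3/4) := by
    intro j; split <;> linarith
  have hcoef_ub : ∀ j : Fin n, (3/5 : ℝ) * (if j = k then 3/4 + δ else 3/4) ≤ 51/100 := by
    intro j; split <;> linarith
  set i₀ : Fin n := ⟨0, hn⟩ with hi₀
  refine ⟨⟨?_, ?_⟩, ?_, ?_⟩
  · -- 1/10 ≤ x 0 : Case D
    by_contra h
    push_neg at h
    have hysucc : ∀ j : Fin n, y j.succ = 0 := by
      intro j
      apply support_col hNE j.succ 0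
      rw [hq0, hqsucc j]
      have h1 := hSBub j
      have h2 := hcoef_ub j
      nlinarith
    have hy0' : y 0 = 1 := by
      have : ∑ j : Fin n, y j.succ = 0 := Finset.sum_eq_zero fun j _ => hysucc j
      linarith
    have hxsucc : ∀ i : Fin n, x i.succ = 0 := by
      intro i
      apply support_row hNE i.succ 0
      rw [hp0, hpsucc i]
      have h1 := hSAub i
      have h0 : 0 ≤ SA i := le_trans (by nlinarith) (hSAlb i)
      nlinarith
    have : ∑ i : Fin n, x i.succ = 0 := Finset.sum_eq_zero fun i _ => hxsucc i
    have : x 0 = 1 := by linarith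
    linarith
  · -- x 0 ≤ 9/10 : Case C
    by_contra h
    push_neg at h
    have hy0' : y 0 = 0 := by
      apply support_col hNE 0 i₀.succ
      rw [hq0, hqsucc i₀]
      have h1 := hSBlb i₀
      have h2 := hcoef_lb i₀
      nlinarith
    have hx0' : x 0 = 0 := by
      apply support_row hNE 0 i₀.succ
      rw [hp0, hpsucc i₀]
      have h1 := hSAlb i₀
      nlinarith
    linarith
  · -- 1/10 ≤ y 0 : Case B
    by_contra h
    push_neg at h
    have hx0' : x 0 = 0 := by
      apply support_row hNE 0 i₀.succ
      rw [hp0, hpsucc i₀]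
      have h1 := hSAlb i₀
      nlinarith
    have hysucc : ∀ j : Fin n, y j.succ = 0 := by
      intro j
      apply support_col hNE j.succ 0
      rw [hq0, hqsucc j]
      have h1 := hSBub j
      have h2 := hcoef_ub j
      nlinarith
    have : ∑ j : Fin n, y j.succ = 0 := Finset.sum_eq_zero fun j _ => hysucc j
    linarith
  · -- y 0 ≤ 9/10 : Case A
    by_contra h
    push_neg at h
    have hxsucc : ∀ i : Fin n, x i.succ = 0 := by
      intro i
      apply support_row hNE i.succ 0
      rw [hp0, hpsucc i]
      have h1 := hSAub i
      nlinarith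
    have hx0' : x 0 = 1 := by
      have : ∑ i : Fin n, x i.succ = 0 := Finset.sum_eq_zero fun i _ => hxsucc i
      linarith
    have hy0' : y 0 = 0 := by
      apply support_col hNE 0 i₀.succ
      rw [hq0, hqsucc i₀]
      have h1 := hSBlb i₀
      have h2 := hcoef_lb i₀
      nlinarith
    linarith
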